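/- A pregeometry (S, cl) is modular if and only if the following condition (*) holds: whenever a, b ∈ S, B ⊆ S is closed and finite dimensional, dim(ab) = 2 and dim(ab/B) ≤ 1, then there is c ∈ cl(ab) ∩ cl(B) with c ∉ cl(∅). -/

import Mathlib

universe u

/-- A pregeometry: a set `S` (here a whole type `β`) together with a closure
operation `cl` satisfying extensivity and idempotence, monotonicity, exchange,
and finite character (Definition 1.2 of the paper). -/
structure Pregeometry (β : Type u) where
  cl : Set β → Set β
  subset_cl : ∀ A : Set β, A ⊆ cl A
  cl_idem : ∀ A : Set β, cl (cl A) = cl A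
  cl_mono : ∀ A B : Set β, A ⊆ B → cl A ⊆ cl B
  exchange : ∀ (A : Set β) (a b : β), a ∈ cl (insert b A) → a ∉ cl A → b ∈ cl (insert a A)
  finChar : ∀ (A : Set β) (a : β), a ∈ cl A → ∃ A₀ ⊆ A, A₀.Finite ∧ a ∈ cl A₀

namespace Pregeometry

variable {β : Type u} (G : Pregeometry β)

/-- The dimension of a set: the least cardinality of a spanning subset, i.e.
the cardinality of a basis. -/
noncomputable def dim (B : Set β) : Cardinal.{u} :=
  sInf {κ : Cardinal.{u} | ∃ J ⊆ B, B ⊆ G.cl J ∧ Cardinal.mk J = κ}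

/-- A set is closed if it equals its closure. -/
def Closed (B : Set β) : Prop := G.cl B = B

/-- A set is finite dimensional if its dimension is finite. -/
def FinDim (B : Set β) : Prop := G.dim B < Cardinal.aleph0

/-- `(S, cl)` is modular: for all closed finite-dimensional `A, B`,
`dim(A ∪ B) = dim A + dim B - dim(A ∩ B)` (stated additively). -/
def Modular : Prop :=
  ∀ A B : Set β, G.Closed A → G.Closed B → G.FinDim A → G.FinDim B →
    G.dim (A ∪ B) + G.dim (A ∩ B) = G.dim A + G.dim B

end Pregeometry

namespace Pregeometry

variable {β : Type u} (G : Pregeometry β)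

lemma cl_subset_cl {X Y : Set β} (h : X ⊆ G.cl Y) : G.cl X ⊆ G.cl Y := by
  have h2 := G.cl_mono _ _ h
  rwa [G.cl_idem] at h2

def Indep (I : Set β) : Prop := ∀ a ∈ I, a ∉ G.cl (I \ {a})

variable {G}

lemma Indep.mono {I J : Set β} (hI : G.Indep I) (h : J ⊆ I) : G.Indep J := by
  intro a ha hmem
  exact hI a (h ha) (G.cl_mono _ _ (Set.diff_subset_diff_left h) hmem)

lemma Indep.notMem_cl_empty {I : Set β} (hI : G.Indep I) {a : β} (ha : a ∈ I) :
    a ∉ G.cl ∅ := fun h => hI a ha (G.cl_mono ∅ _ (Set.empty_subset _) h)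

lemma Indep.insert_indep {I : Set β} (hI : G.Indep I) {a : β} (ha : a ∉ G.cl I) :
    G.Indep (insert a I) := by
  have haI : a ∉ I := fun h => ha (G.subset_cl I h)
  intro b hb hmem
  rcases Set.mem_insert_iff.1 hb with rfl | hbI
  · apply ha
    refine G.cl_mono _ _ ?_ hmem
    intro x hx
    rcases Set.mem_insert_iff.1 hx.1 with rfl | h
    · exact absurd rfl hx.2
    · exact h
  · have hab : a ≠ b := fun h => haI (h ▸ hbI)
    have hset : insert a I \ {b} = insert a (I \ {b}) :=
      (Set.insert_diff_singleton_comm hab I).symm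
    rw [hset] at hmem
    have hb2 : b ∉ G.cl (I \ {b}) := hI b hbI
    have hx := G.exchange (I \ {b}) b a hmem hb2
    have heq : insert b (I \ {b}) = I := by
      rw [Set.insert_diff_singleton, Set.insert_eq_self.mpr hbI]
    rw [heq] at hx
    exact ha hx

lemma steinitz_aux [DecidableEq β] : ∀ (n : ℕ) (I J : Finset β), (I \ J).card ≤ n →
    G.Indep ↑I → ↑I ⊆ G.cl ↑J → I.card ≤ J.card := by
  classical
  intro n
  induction n with
  | zero =>
    intro I J hc hI hIJ
    have : I ⊆ J := Finset.sdiff_eq_empty_iff_subset.mp (Finset.card_eq_zero.mp (Nat.le_zero.mp hc))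
    exact Finset.card_le_card this
  | succ n ih =>
    intro I J hc hI hIJ
    by_cases hsub : I ⊆ J
    · exact Finset.card_le_card hsub
    obtain ⟨a, haI, haJ⟩ := Finset.not_subset.1 hsub
    have haclJ : a ∈ G.cl ↑J := hIJ (by simpa using haI)
    set S := J.powerset.filter (fun J' : Finset β => a ∈ G.cl ↑J') with hS
    have hJS : J ∈ S := by simp [hS, haclJ]
    obtain ⟨J', hJ'S, hmin⟩ := S.exists_min_image Finset.card ⟨J, hJS⟩
    rw [hS, Finset.mem_filter, Finset.mem_powerset] at hJ'S
    obtain ⟨hJ'sub, haJ'⟩ := hJ'S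
    have hexJ : ∃ j ∈ J', j ∉ I := by
      by_contra h
      push_neg at h
      have hsub2 : (↑J' : Set β) ⊆ (↑I : Set β) \ {a} := by
        intro x hx
        have hx' : x ∈ J' := by exact_mod_cast hx
        exact ⟨by exact_mod_cast h x hx', fun hxa => haJ (by
          have : x = a := hxa
          exact this ▸ hJ'sub hx')⟩
      exact hI a (by simpa using haI) (G.cl_mono _ _ hsub2 haJ')
    obtain ⟨j, hjJ', hjI⟩ := hexJ
    have hajerase : a ∉ G.cl ↑(J'.erase j) := by
      intro h
      have hmem : J'.erase j ∈ S := by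
        rw [hS, Finset.mem_filter, Finset.mem_powerset]
        exact ⟨(Finset.erase_subset _ _).trans hJ'sub, h⟩
      have h1 := hmin _ hmem
      have h2 := Finset.card_erase_lt_of_mem hjJ'
      omega
    have hexch : j ∈ G.cl (insert a ↑(J'.erase j)) := by
      have h0 : a ∈ G.cl (insert j ↑(J'.erase j)) := by
        have : (insert j ↑(J'.erase j) : Set β) = ↑J' := by
          rw [Finset.coe_erase, Set.insert_diff_singleton,
            Set.insert_eq_self.mpr (by exact_mod_cast hjJ')]
        rw [this]; exact haJ'
      exact G.exchange _ a j h0 hajerase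
    set J2 := insert a (J.erase j) with hJ2
    have hJsub : (↑J : Set β) ⊆ G.cl ↑J2 := by
      intro x hx
      have hx' : x ∈ J := by exact_mod_cast hx
      by_cases hxj : x = j
      · have hsubJ2 : (insert a ↑(J'.erase j) : Set β) ⊆ ↑J2 := by
          intro y hy
          rcases Set.mem_insert_iff.1 hy with rfl | hy2
          · exact_mod_cast Finset.mem_insert_self y _
          · have h1 : y ∈ J'.erase j := by exact_mod_cast hy2
            have h2 : y ∈ J.erase j := Finset.erase_subset_erase _ hJ'sub h1
            exact_mod_cast Finset.mem_insert.mpr (Or.inr h2)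
        have hj2 := G.cl_mono _ _ hsubJ2 hexch
        rwa [hxj]
      · apply G.subset_cl
        have : x ∈ J2 := by
          rw [hJ2, Finset.mem_insert]
          exact Or.inr (Finset.mem_erase.mpr ⟨hxj, hx'⟩)
        exact_mod_cast this
    have hIJ2 : ↑I ⊆ G.cl ↑J2 := fun x hx => G.cl_subset_cl hJsub (hIJ hx)
    have hcard2 : J2.card ≤ J.card := by
      have h1 := Finset.card_insert_le a (J.erase j)
      have h2 := Finset.card_erase_of_mem (hJ'sub hjJ')
      have h3 : 1 ≤ J.card := Finset.card_pos.mpr ⟨j, hJ'sub hjJ'⟩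
      have h0 : J2.card = (insert a (J.erase j)).card := by rw [hJ2]
      omega
    have hdiff : (I \ J2).card ≤ n := by
      have hsub2 : I \ J2 ⊆ (I \ J).erase a := by
        intro x hx
        rw [Finset.mem_sdiff] at hx
        obtain ⟨hxI, hxJ2⟩ := hx
        rw [hJ2, Finset.mem_insert] at hxJ2
        push_neg at hxJ2
        obtain ⟨hxa, hxe⟩ := hxJ2
        rw [Finset.mem_erase] at hxe
        push_neg at hxe
        have hxj : x ≠ j := fun h => hjI (h ▸ hxI)
        exact Finset.mem_erase.mpr ⟨hxa, Finset.mem_sdiff.mpr ⟨hxI, hxe hxj⟩⟩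
      have h1 := Finset.card_le_card hsub2
      have h2 : ((I \ J).erase a).card < (I \ J).card :=
        Finset.card_erase_lt_of_mem (Finset.mem_sdiff.mpr ⟨haI, haJ⟩)
      omega
    exact (ih I J2 hdiff hI hIJ2).trans hcard2

lemma mk_coe_eq_ncard {s : Set β} (hs : s.Finite) : Cardinal.mk s = s.ncard := by
  obtain ⟨t, rfl⟩ := hs.exists_finset_coe
  rw [Set.ncard_coe_finset]
  exact_mod_cast Cardinal.mk_coe_finset

/-- Steinitz exchange, set version. -/
lemma steinitz {I J : Set β} (hI : G.Indep I) (hJfin : J.Finite)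
    (hIJ : I ⊆ G.cl J) : I.Finite ∧ I.ncard ≤ J.ncard := by
  classical
  obtain ⟨tJ, rfl⟩ := hJfin.exists_finset_coe
  have key : ∀ I0 : Set β, I0.Finite → G.Indep I0 → I0 ⊆ G.cl ↑tJ → I0.ncard ≤ tJ.card := by
    intro I0 h0 hind hsub
    obtain ⟨tI, rfl⟩ := h0.exists_finset_coe
    rw [Set.ncard_coe_finset]
    exact steinitz_aux (tI \ tJ).card tI tJ le_rfl hind hsub
  have hfin : I.Finite := by
    by_contra hinf
    have hinf : I.Infinite := hinf
    obtain ⟨I0, hI0sub, hI0fin, hI0card⟩ := hinf.exists_subset_ncard_eq (tJ.card + 1)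
    have := key I0 hI0fin (hI.mono hI0sub) (fun x hx => hIJ (hI0sub hx))
    omega
  refine ⟨hfin, ?_⟩
  rw [Set.ncard_coe_finset]
  exact key I hfin hI hIJ

lemma dim_le_mk {X J : Set β} (hJX : J ⊆ X) (h : X ⊆ G.cl J) :
    G.dim X ≤ Cardinal.mk J :=
  csInf_le' ⟨J, hJX, h, rfl⟩

lemma dim_spec (X : Set β) : ∃ J ⊆ X, X ⊆ G.cl J ∧ Cardinal.mk J = G.dim X := by
  have h : Cardinal.mk X ∈ {κ : Cardinal.{u} | ∃ J ⊆ X, X ⊆ G.cl J ∧ Cardinal.mk J = κ} :=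
    ⟨X, subset_rfl, G.subset_cl X, rfl⟩
  exact csInf_mem ⟨_, h⟩

/-- A basis (independent spanning subset) realizes the dimension. -/
lemma dim_eq_of_basis {X I : Set β} (hIX : I ⊆ X) (hind : G.Indep I)
    (hfin : I.Finite) (hspan : X ⊆ G.cl I) : G.dim X = (I.ncard : Cardinal) := by
  refine le_antisymm (by rw [← mk_coe_eq_ncard hfin]; exact G.dim_le_mk hIX hspan) ?_
  obtain ⟨J, hJX, hJspan, hJcard⟩ := G.dim_spec X
  rw [← hJcard]
  by_cases hJfin : J.Finite
  · have := (G.steinitz hind hJfin (hIX.trans hJspan)).2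
    rw [mk_coe_eq_ncard hJfin]
    exact_mod_cast this
  · have : Cardinal.aleph0 ≤ Cardinal.mk J := by
      rw [Cardinal.aleph0_le_mk_iff]
      exact Set.infinite_coe_iff.mpr hJfin
    exact le_trans (le_of_lt (Cardinal.nat_lt_aleph0 _)) this

lemma indep_bounded {X I J : Set β} (hJfin : J.Finite) (hspan : X ⊆ G.cl J)
    (hind : G.Indep I) (hIX : I ⊆ X) : I.Finite ∧ I.ncard ≤ J.ncard :=
  G.steinitz hind hJfin (hIX.trans hspan)

/-- Extend an independent subset of `X` to a basis of `X`. -/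
lemma exists_basis_extending {X J I₀ : Set β} (hJfin : J.Finite) (hspan : X ⊆ G.cl J)
    (h₀X : I₀ ⊆ X) (h₀ : G.Indep I₀) (h₀fin : I₀.Finite) :
    ∃ I, I₀ ⊆ I ∧ I ⊆ X ∧ G.Indep I ∧ I.Finite ∧ X ⊆ G.cl I := by
  set T : Set ℕ := {n | ∃ I, I₀ ⊆ I ∧ I ⊆ X ∧ G.Indep I ∧ I.Finite ∧ I.ncard = n} with hT
  have hne : T.Nonempty := ⟨I₀.ncard, I₀, subset_rfl, h₀X, h₀, h₀fin, rfl⟩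
  have hbdd : BddAbove T := by
    refine ⟨J.ncard, ?_⟩
    rintro n ⟨I, -, hIX, hind, hfin, rfl⟩
    exact (G.indep_bounded hJfin hspan hind hIX).2
  obtain ⟨I, hI₀I, hIX, hind, hfin, hcard⟩ := Nat.sSup_mem hne hbdd
  refine ⟨I, hI₀I, hIX, hind, hfin, ?_⟩
  intro x hx
  by_contra hxcl
  have hxI : x ∉ I := fun h => hxcl (G.subset_cl I h)
  have hmem : I.ncard + 1 ∈ T := by
    refine ⟨insert x I, hI₀I.trans (Set.subset_insert _ _), Set.insert_subset hx hIX,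
      hind.insert_indep hxcl, hfin.insert x, ?_⟩
    rw [Set.ncard_insert_of_notMem hxI hfin]
  have := le_csSup hbdd hmem
  omega

lemma exists_basis_of_finDim {X : Set β} (hX : G.FinDim X) :
    ∃ I, I ⊆ X ∧ G.Indep I ∧ I.Finite ∧ X ⊆ G.cl I ∧ G.dim X = (I.ncard : Cardinal) := by
  obtain ⟨J, hJX, hJspan, hJcard⟩ := G.dim_spec X
  have hJfin : J.Finite := by
    rw [← Set.finite_coe_iff, ← Cardinal.lt_aleph0_iff_finite, hJcard]
    exact hX
  obtain ⟨I, -, hIX, hind, hfin, hspan⟩ :=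
    G.exists_basis_extending hJfin hJspan (Set.empty_subset X)
      (fun a ha => absurd ha (Set.notMem_empty a)) Set.finite_empty
  exact ⟨I, hIX, hind, hfin, hspan, G.dim_eq_of_basis hIX hind hfin hspan⟩

lemma finDim_of_subset_cl {X J : Set β} (hJfin : J.Finite) (hspan : X ⊆ G.cl J) :
    G.FinDim X := by
  obtain ⟨I, -, hIX, hind, hfin, hspanI⟩ :=
    G.exists_basis_extending hJfin hspan (Set.empty_subset X)
      (fun a ha => absurd ha (Set.notMem_empty a)) Set.finite_empty
  have := G.dim_eq_of_basis hIX hind hfin hspanI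
  rw [Pregeometry.FinDim, this]
  exact Cardinal.nat_lt_aleph0 _

lemma dim_le_ncard_of_subset_cl {X J : Set β} (hJfin : J.Finite) (hspan : X ⊆ G.cl J) :
    G.dim X ≤ (J.ncard : Cardinal) := by
  obtain ⟨I, -, hIX, hind, hfin, hspanI⟩ :=
    G.exists_basis_extending hJfin hspan (Set.empty_subset X)
      (fun a ha => absurd ha (Set.notMem_empty a)) Set.finite_empty
  rw [G.dim_eq_of_basis hIX hind hfin hspanI]
  exact_mod_cast (G.indep_bounded hJfin hspan hind hIX).2

lemma dim_mono_cl {X Y : Set β} (hY : G.FinDim Y) (h : X ⊆ G.cl Y) : G.dim X ≤ G.dim Y := by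
  obtain ⟨I, hIY, hind, hfin, hspan, hdim⟩ := G.exists_basis_of_finDim hY
  have hXI : X ⊆ G.cl I := h.trans (G.cl_subset_cl hspan)
  rw [hdim]
  exact G.dim_le_ncard_of_subset_cl hfin hXI

lemma finDim_mono_cl {X Y : Set β} (hY : G.FinDim Y) (h : X ⊆ G.cl Y) : G.FinDim X :=
  lt_of_le_of_lt (G.dim_mono_cl hY h) hY

lemma dim_congr_cl {X Y : Set β} (hY : G.FinDim Y) (h1 : X ⊆ G.cl Y) (h2 : Y ⊆ G.cl X) :
    G.dim X = G.dim Y :=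
  le_antisymm (G.dim_mono_cl hY h1) (G.dim_mono_cl (G.finDim_mono_cl hY h1) h2)

lemma dim_cl {X : Set β} (hX : G.FinDim X) : G.dim (G.cl X) = G.dim X :=
  G.dim_congr_cl hX subset_rfl (by rw [G.cl_idem]; exact G.subset_cl X)

lemma finDim_cl {X : Set β} (hX : G.FinDim X) : G.FinDim (G.cl X) := by
  rw [Pregeometry.FinDim, G.dim_cl hX]; exact hX

lemma finDim_of_finite {X : Set β} (hX : X.Finite) : G.FinDim X :=
  G.finDim_of_subset_cl hX (G.subset_cl X)

lemma dim_union_le_ncard {X F : Set β} (hX : G.FinDim X) (hF : F.Finite) :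
    G.dim (X ∪ F) ≤ G.dim X + (F.ncard : Cardinal) := by
  obtain ⟨I, hIX, hind, hfin, hspan, hdim⟩ := G.exists_basis_of_finDim hX
  have hs : X ∪ F ⊆ G.cl (I ∪ F) := by
    intro x hx
    rcases hx with hx | hx
    · exact G.cl_mono _ _ Set.subset_union_left (hspan hx)
    · exact G.subset_cl _ (Or.inr hx)
  refine (G.dim_le_ncard_of_subset_cl (hfin.union hF) hs).trans ?_
  rw [hdim]
  have hnc : (I ∪ F).ncard ≤ I.ncard + F.ncard := Set.ncard_union_le I F
  exact_mod_cast hnc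

lemma dim_insert_le {X : Set β} (a : β) (hX : G.FinDim X) :
    G.dim (insert a X) ≤ G.dim X + 1 := by
  have h := G.dim_union_le_ncard (F := {a}) hX (Set.finite_singleton a)
  rw [Set.union_singleton, Set.ncard_singleton] at h
  exact_mod_cast h

lemma dim_insert_of_not_mem_cl {X : Set β} {a : β} (hX : G.FinDim X) (ha : a ∉ G.cl X) :
    G.dim (insert a X) = G.dim X + 1 := by
  obtain ⟨I, hIX, hind, hfin, hspan, hdim⟩ := G.exists_basis_of_finDim hX
  have haI : a ∉ G.cl I := fun h => ha (G.cl_mono _ _ hIX h)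
  have hind2 : G.Indep (insert a I) := hind.insert_indep haI
  have hsub : insert a I ⊆ insert a X := Set.insert_subset_insert hIX
  have hspan2 : insert a X ⊆ G.cl (insert a I) := by
    intro x hx
    rcases hx with rfl | hx
    · exact G.subset_cl _ (Set.mem_insert _ _)
    · exact G.cl_mono _ _ (Set.subset_insert a I) (hspan hx)
  have haX : a ∉ I := fun h => haI (G.subset_cl I h)
  rw [G.dim_eq_of_basis hsub hind2 (hfin.insert a) hspan2, hdim,
    Set.ncard_insert_of_notMem haX hfin]
  push_cast
  ring

lemma indep_ncard_le_dim {X I : Set β} (hX : G.FinDim X) (hind : G.Indep I) (hIX : I ⊆ X) :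
    I.Finite ∧ (I.ncard : Cardinal) ≤ G.dim X := by
  obtain ⟨J, hJX, hJind, hJfin, hJspan, hJdim⟩ := G.exists_basis_of_finDim hX
  obtain ⟨hfin, hle⟩ := G.indep_bounded hJfin hJspan hind hIX
  exact ⟨hfin, by rw [hJdim]; exact_mod_cast hle⟩

lemma subset_cl_of_dim_le {X Y : Set β} (hY : G.FinDim Y) (hXY : X ⊆ Y)
    (hle : G.dim Y ≤ G.dim X) : Y ⊆ G.cl X := by
  have hX : G.FinDim X := G.finDim_mono_cl hY (hXY.trans (G.subset_cl Y))
  obtain ⟨I, hIX, hind, hfin, hspan, hdim⟩ := G.exists_basis_of_finDim hX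
  have hYI : Y ⊆ G.cl I := by
    by_contra h
    obtain ⟨y, hyY, hycl⟩ := Set.not_subset.1 h
    have hind2 := hind.insert_indep hycl
    have hsub2 : insert y I ⊆ Y := Set.insert_subset hyY (hIX.trans hXY)
    have h2 := (G.indep_ncard_le_dim hY hind2 hsub2).2
    rw [Set.ncard_insert_of_notMem (fun hh => hycl (G.subset_cl I hh)) hfin] at h2
    have h3 : ((I.ncard + 1 : ℕ) : Cardinal) ≤ (I.ncard : Cardinal) :=
      h2.trans (hle.trans (le_of_eq hdim))
    have h4 : I.ncard + 1 ≤ I.ncard := by exact_mod_cast h3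
    omega
  exact hYI.trans (G.cl_mono _ _ hIX)

lemma Closed.inter {A B : Set β} (hA : G.Closed A) (hB : G.Closed B) : G.Closed (A ∩ B) := by
  refine subset_antisymm ?_ (G.subset_cl _)
  intro x hx
  constructor
  · have h1 : G.cl (A ∩ B) ⊆ G.cl A := G.cl_mono _ _ Set.inter_subset_left
    rw [hA] at h1
    exact h1 hx
  · have h2 : G.cl (A ∩ B) ⊆ G.cl B := G.cl_mono _ _ Set.inter_subset_right
    rw [hB] at h2
    exact h2 hx

lemma finDim_nat {X : Set β} (hX : G.FinDim X) : ∃ n : ℕ, G.dim X = n := by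
  rw [Pregeometry.FinDim, Cardinal.lt_aleph0] at hX
  exact hX

lemma dim_union_of_rel_indep : ∀ (n : ℕ) (F B : Set β), F.Finite → F.ncard = n →
    G.FinDim B → (∀ a ∈ F, a ∉ G.cl ((F \ {a}) ∪ B)) →
    G.dim (F ∪ B) = G.dim B + n := by
  intro n
  induction n with
  | zero =>
    intro F B hFfin hcard hB hrel
    have hF : F = ∅ := (Set.ncard_eq_zero hFfin).1 hcard
    subst hF
    rw [Set.empty_union]
    simp
  | succ n ih =>
    intro F B hFfin hcard hB hrel
    have hne : F.Nonempty := by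
      rw [Set.nonempty_iff_ne_empty]
      intro h
      rw [h, Set.ncard_empty] at hcard
      omega
    obtain ⟨a, haF⟩ := hne
    have hrest : ∀ b ∈ F \ {a}, b ∉ G.cl (((F \ {a}) \ {b}) ∪ B) := by
      intro b hb hmem
      refine hrel b hb.1 (G.cl_mono _ _ ?_ hmem)
      exact Set.union_subset_union_left B (Set.diff_subset_diff_left Set.diff_subset)
    have hc2 : (F \ {a}).ncard = n := by
      rw [Set.ncard_diff_singleton_of_mem haF]
      omega
    have hIH := ih (F \ {a}) B hFfin.diff hc2 hB hrest
    have hnotmem : a ∉ G.cl ((F \ {a}) ∪ B) := hrel a haF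
    have hfd : G.FinDim ((F \ {a}) ∪ B) := by
      rw [Pregeometry.FinDim, hIH]
      exact Cardinal.add_lt_aleph0 hB (Cardinal.nat_lt_aleph0 n)
    have hstep := G.dim_insert_of_not_mem_cl hfd hnotmem
    have hins : insert a ((F \ {a}) ∪ B) = F ∪ B := by
      rw [← Set.insert_union, Set.insert_diff_singleton, Set.insert_eq_self.mpr haF]
    rw [hins] at hstep
    rw [hstep, hIH]
    push_cast
    ring

lemma exists_minimal_rel_spanning : ∀ (n : ℕ) (F B : Set β), F.Finite → F.ncard ≤ n →
    ∃ F0, F0 ⊆ F ∧ F0.Finite ∧ G.cl (F0 ∪ B) = G.cl (F ∪ B) ∧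
      (∀ a ∈ F0, a ∉ G.cl ((F0 \ {a}) ∪ B)) := by
  intro n
  induction n with
  | zero =>
    intro F B hF hc
    have hF0 : F = ∅ := (Set.ncard_eq_zero hF).1 (Nat.le_zero.1 hc)
    subst hF0
    exact ⟨∅, subset_rfl, Set.finite_empty, rfl, fun a ha => absurd ha (Set.notMem_empty a)⟩
  | succ n ih =>
    intro F B hF hc
    by_cases hall : ∀ a ∈ F, a ∉ G.cl ((F \ {a}) ∪ B)
    · exact ⟨F, subset_rfl, hF, rfl, hall⟩
    · push_neg at hall
      obtain ⟨a, haF, hacl⟩ := hall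
      have hcl : G.cl ((F \ {a}) ∪ B) = G.cl (F ∪ B) := by
        refine subset_antisymm
          (G.cl_mono _ _ (Set.union_subset_union_left B Set.diff_subset)) ?_
        refine G.cl_subset_cl ?_
        intro x hx
        rcases hx with hxF | hxB
        · by_cases hxa : x = a
          · subst hxa; exact hacl
          · exact G.subset_cl _ (Or.inl ⟨hxF, hxa⟩)
        · exact G.subset_cl _ (Or.inr hxB)
      have hc2 : (F \ {a}).ncard ≤ n := by
        rw [Set.ncard_diff_singleton_of_mem haF]
        have : 0 < F.ncard := (Set.ncard_pos hF).2 ⟨a, haF⟩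
        omega
      obtain ⟨F0, hsub, hfin, hcl0, hrel⟩ := ih (F \ {a}) B hF.diff hc2
      exact ⟨F0, hsub.trans Set.diff_subset, hfin, hcl0.trans hcl, hrel⟩

/-- Submodularity. -/
lemma dim_submodular {A B : Set β} (hAfd : G.FinDim A) (hBfd : G.FinDim B) :
    G.dim (A ∪ B) + G.dim (A ∩ B) ≤ G.dim A + G.dim B := by
  have hABfd : G.FinDim (A ∩ B) :=
    G.finDim_mono_cl hAfd (Set.inter_subset_left.trans (G.subset_cl A))
  obtain ⟨I, hIsub, hIind, hIfin, hIspan, hIdim⟩ := G.exists_basis_of_finDim hABfd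
  obtain ⟨J, hJX, hJspan, hJcard⟩ := G.dim_spec A
  have hJfin : J.Finite := by
    rw [← Set.finite_coe_iff, ← Cardinal.lt_aleph0_iff_finite, hJcard]
    exact hAfd
  obtain ⟨I', hII', hI'A, hI'ind, hI'fin, hI'span⟩ :=
    G.exists_basis_extending hJfin hJspan (hIsub.trans Set.inter_subset_left) hIind hIfin
  have hI'dim : G.dim A = (I'.ncard : Cardinal) := G.dim_eq_of_basis hI'A hI'ind hI'fin hI'span
  set D := I' \ I with hD
  have hspan2 : A ∪ B ⊆ G.cl (B ∪ D) := by
    have hIB : I ⊆ B := hIsub.trans Set.inter_subset_right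
    have hI'sub : I' ⊆ B ∪ D := by
      intro x hx
      by_cases hxI : x ∈ I
      · exact Or.inl (hIB hxI)
      · exact Or.inr ⟨hx, hxI⟩
    have hA2 : A ⊆ G.cl (B ∪ D) := hI'span.trans (G.cl_mono _ _ hI'sub)
    intro x hx
    rcases hx with hx | hx
    · exact hA2 hx
    · exact G.subset_cl _ (Or.inl hx)
  have hDfin : D.Finite := hI'fin.diff (t := I)
  have hBD : G.dim (B ∪ D) ≤ G.dim B + (D.ncard : Cardinal) :=
    G.dim_union_le_ncard hBfd hDfin
  have hBDfd : G.FinDim (B ∪ D) :=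
    lt_of_le_of_lt hBD (Cardinal.add_lt_aleph0 hBfd (Cardinal.nat_lt_aleph0 _))
  have h1 : G.dim (A ∪ B) ≤ G.dim B + (D.ncard : Cardinal) :=
    (G.dim_mono_cl hBDfd hspan2).trans hBD
  have hcard : D.ncard + I.ncard = I'.ncard := by
    rw [hD, Set.ncard_diff hII' (hI'fin.subset hII')]
    have := Set.ncard_le_ncard hII' hI'fin
    omega
  calc G.dim (A ∪ B) + G.dim (A ∩ B) ≤ (G.dim B + (D.ncard : Cardinal)) + (I.ncard : Cardinal) := by
        rw [hIdim]; exact add_le_add_left h1 _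
    _ = G.dim B + ((D.ncard + I.ncard : ℕ) : Cardinal) := by push_cast; ring
    _ = G.dim A + G.dim B := by rw [hcard, ← hI'dim]; ring

def Criterion (G : Pregeometry β) : Prop :=
  ∀ (a b : β) (B : Set β), G.Closed B → G.FinDim B →
    G.dim {a, b} = 2 → G.dim ({a, b} ∪ B) ≤ G.dim B + 1 →
    ∃ c, c ∈ G.cl {a, b} ∩ G.cl B ∧ c ∉ G.cl (∅ : Set β)

lemma key_zero {A B : Set β} (hB : G.Closed B) (hABfd : G.FinDim (A ∪ B))
    (hle : G.dim (A ∪ B) ≤ G.dim B) : A ⊆ B := by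
  have h := G.subset_cl_of_dim_le hABfd Set.subset_union_right hle
  rw [hB] at h
  exact Set.subset_union_left.trans h

lemma key_one (hcrit : G.Criterion) {A B : Set β} (hA : G.Closed A) (hB : G.Closed B)
    (hAfd : G.FinDim A) (hBfd : G.FinDim B)
    (hle : G.dim (A ∪ B) ≤ G.dim B + 1) :
    G.dim A ≤ G.dim (A ∩ B) + 1 := by
  classical
  have hABfd : G.FinDim (A ∪ B) :=
    lt_of_le_of_lt hle (Cardinal.add_lt_aleph0 hBfd Cardinal.one_lt_aleph0)
  by_cases h0 : G.dim (A ∪ B) ≤ G.dim B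
  · have hAB : A ⊆ B := G.key_zero hB hABfd h0
    rw [Set.inter_eq_left.mpr hAB]
    exact le_self_add
  push_neg at h0
  have heq : G.dim (A ∪ B) = G.dim B + 1 := by
    refine le_antisymm hle ?_
    obtain ⟨nB, hnB⟩ := G.finDim_nat hBfd
    obtain ⟨nU, hnU⟩ := G.finDim_nat hABfd
    rw [hnB, hnU]
    rw [hnB, hnU] at h0
    have h1 : nB < nU := by exact_mod_cast h0
    have h2 : nB + 1 ≤ nU := h1
    exact_mod_cast h2
  -- find a1 with A ⊆ cl ({a1} ∪ B), a1 ∉ B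
  obtain ⟨F, hFA, hFind, hFfin, hFspan, hFdim⟩ := G.exists_basis_of_finDim hAfd
  obtain ⟨F0, hF0F, hF0fin, hF0cl, hF0rel⟩ :=
    G.exists_minimal_rel_spanning F.ncard F B hFfin le_rfl
  have hclFB : G.cl (F ∪ B) = G.cl (A ∪ B) := by
    refine subset_antisymm (G.cl_mono _ _ (Set.union_subset_union_left B hFA))
      (G.cl_subset_cl ?_)
    intro x hx
    rcases hx with hx | hx
    · exact G.cl_mono _ _ Set.subset_union_left (hFspan hx)
    · exact G.subset_cl _ (Or.inr hx)
  have hdimF0B : G.dim (F0 ∪ B) = G.dim B + (F0.ncard : Cardinal) :=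
    G.dim_union_of_rel_indep F0.ncard F0 B hF0fin rfl hBfd hF0rel
  have hdimeq : G.dim (F0 ∪ B) = G.dim (A ∪ B) := by
    apply G.dim_congr_cl hABfd
    · intro x hx
      rcases hx with hx | hx
      · exact G.subset_cl _ (Or.inl (hFA (hF0F hx)))
      · exact G.subset_cl _ (Or.inr hx)
    · rw [hF0cl, hclFB]
      exact G.subset_cl _
  have hF0card : F0.ncard = 1 := by
    obtain ⟨nB, hnB⟩ := G.finDim_nat hBfd
    have hcast : (nB : Cardinal) + (F0.ncard : ℕ) = (nB : Cardinal) + 1 := by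
      rw [← hnB, ← hdimF0B, hdimeq, heq, hnB]
    have h2 : nB + F0.ncard = nB + 1 := by exact_mod_cast hcast
    omega
  obtain ⟨a1, hF0⟩ := Set.ncard_eq_one.1 hF0card
  have ha1cl : a1 ∉ G.cl B := by
    have h := hF0rel a1 (by rw [hF0]; exact Set.mem_singleton a1)
    rw [hF0] at h
    simpa using h
  have ha1B : a1 ∉ B := fun h => ha1cl (G.subset_cl B h)
  have hAspan : A ⊆ G.cl ({a1} ∪ B) := by
    have h1 : A ⊆ G.cl (A ∪ B) := Set.subset_union_left.trans (G.subset_cl _)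
    rw [← hclFB, ← hF0cl, hF0] at h1
    exact h1
  have ha1A : a1 ∈ A := hFA (hF0F (hF0 ▸ Set.mem_singleton a1))
  have ha1ind : G.Indep {a1} := by
    intro x hx
    rw [Set.mem_singleton_iff] at hx
    subst hx
    intro hmem
    apply ha1cl
    refine G.cl_mono _ _ (Set.empty_subset B) ?_
    simpa using hmem
  obtain ⟨J, hJA, hJspan, hJcard⟩ := G.dim_spec A
  have hJfin : J.Finite := by
    rw [← Set.finite_coe_iff, ← Cardinal.lt_aleph0_iff_finite, hJcard]
    exact hAfd
  obtain ⟨I, haI, hIA, hIind, hIfin, hIspan⟩ :=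
    G.exists_basis_extending hJfin hJspan (Set.singleton_subset_iff.mpr ha1A) ha1ind
      (Set.finite_singleton a1)
  set C := I \ {a1} with hC
  have hstep : ∀ b : β, ∃ c, b ∈ C → c ∈ A ∩ B ∧ b ∈ G.cl {a1, c} := by
    intro b
    by_cases hb : b ∈ C
    swap
    · exact ⟨b, fun h => absurd h hb⟩
    have hbA : b ∈ A := hIA hb.1
    have hba : b ≠ a1 := hb.2
    have hpair : G.Indep {a1, b} := by
      refine hIind.mono ?_
      intro x hx
      rcases hx with rfl | hx
      · exact haI rfl
      · rw [Set.mem_singleton_iff] at hx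
        subst hx
        exact hb.1
    have hdimpair : G.dim {a1, b} = 2 := by
      rw [G.dim_eq_of_basis subset_rfl hpair (Set.toFinite _) (G.subset_cl _),
        Set.ncard_pair (Ne.symm hba)]
      norm_num
    have hdimpB : G.dim ({a1, b} ∪ B) ≤ G.dim B + 1 := by
      refine (G.dim_mono_cl hABfd ?_).trans (le_of_eq heq)
      intro x hx
      apply G.subset_cl
      rcases hx with hx | hx
      · rcases hx with rfl | hx
        · exact Or.inl ha1A
        · rw [Set.mem_singleton_iff] at hx
          subst hx
          exact Or.inl hbA
      · exact Or.inr hx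
    obtain ⟨c, ⟨hc1, hc2⟩, hc3⟩ := hcrit a1 b B hB hBfd hdimpair hdimpB
    rw [hB] at hc2
    have hcA : c ∈ A := by
      have hsub : G.cl {a1, b} ⊆ G.cl A := by
        refine G.cl_mono _ _ ?_
        intro x hx
        rcases hx with rfl | hx
        · exact ha1A
        · rw [Set.mem_singleton_iff] at hx
          subst hx
          exact hbA
      rw [hA] at hsub
      exact hsub hc1
    have hcna1 : c ∉ G.cl {a1} := by
      intro hmem
      have hx : a1 ∈ G.cl {c} := by
        have h4 := G.exchange ∅ c a1 (by simpa using hmem) hc3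
        simpa using h4
      apply ha1cl
      exact G.cl_mono _ _ (Set.singleton_subset_iff.mpr hc2) hx
    have hbcl : b ∈ G.cl {a1, c} := by
      have h1 : c ∈ G.cl (insert b {a1}) := by
        rw [show (insert b {a1} : Set β) = {a1, b} from Set.pair_comm b a1]
        exact hc1
      have h2 := G.exchange {a1} c b h1 hcna1
      rw [show (insert c {a1} : Set β) = {a1, c} from Set.pair_comm c a1] at h2
      exact h2
    exact ⟨c, fun _ => ⟨⟨hcA, hc2⟩, hbcl⟩⟩
  choose f hf using hstep
  set D := f '' C with hDdef
  have hDsub : D ⊆ A ∩ B := by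
    rintro x ⟨b, hb, rfl⟩
    exact (hf b hb).1
  have hCfin : C.Finite := hIfin.diff
  have hDfin : D.Finite := hCfin.image f
  have hspanD : A ⊆ G.cl (insert a1 D) := by
    refine hIspan.trans (G.cl_subset_cl ?_)
    intro x hx
    by_cases hxa : x = a1
    · subst hxa
      exact G.subset_cl _ (Set.mem_insert _ _)
    · have hxC : x ∈ C := ⟨hx, hxa⟩
      refine G.cl_mono _ _ ?_ (hf x hxC).2
      intro y hy
      rcases hy with rfl | hy
      · exact Set.mem_insert _ _
      · rw [Set.mem_singleton_iff] at hy
        subst hy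
        exact Set.mem_insert_of_mem _ ⟨x, hxC, rfl⟩
  have hABifd : G.FinDim (A ∩ B) :=
    G.finDim_mono_cl hAfd (Set.inter_subset_left.trans (G.subset_cl A))
  have h1 : G.dim A ≤ G.dim (insert a1 D) :=
    G.dim_mono_cl (G.finDim_of_finite (hDfin.insert a1)) hspanD
  have h2 : G.dim (insert a1 D) ≤ G.dim D + 1 :=
    G.dim_insert_le a1 (G.finDim_of_finite hDfin)
  have h3 : G.dim D ≤ G.dim (A ∩ B) :=
    G.dim_mono_cl hABifd (hDsub.trans (G.subset_cl _))
  calc G.dim A ≤ G.dim D + 1 := h1.trans h2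
    _ ≤ G.dim (A ∩ B) + 1 := add_le_add_left h3 1

lemma key (hcrit : G.Criterion) : ∀ (d : ℕ) (A B : Set β), G.Closed A → G.Closed B →
    G.FinDim A → G.FinDim B → G.dim (A ∪ B) ≤ G.dim B + d →
    G.dim A ≤ G.dim (A ∩ B) + d := by
  intro d
  induction d using Nat.strong_induction_on with
  | _ d ih =>
    intro A B hA hB hAfd hBfd hle
    match d, ih with
    | 0, _ =>
      rw [Nat.cast_zero, add_zero] at hle ⊢
      have hABfd : G.FinDim (A ∪ B) := lt_of_le_of_lt hle hBfd
      rw [Set.inter_eq_left.mpr (G.key_zero hB hABfd hle)]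
    | 1, _ =>
      rw [Nat.cast_one] at hle ⊢
      exact G.key_one hcrit hA hB hAfd hBfd hle
    | (k+2), ih =>
      have hk1 : k + 1 < k + 2 := by omega
      have h1lt : 1 < k + 2 := by omega
      by_cases hcase : G.dim (A ∪ B) ≤ G.dim B + ((k+1 : ℕ) : Cardinal)
      · refine (ih (k+1) hk1 A B hA hB hAfd hBfd hcase).trans ?_
        refine add_le_add_right ?_ _
        exact_mod_cast Nat.le_succ (k+1)
      · push_neg at hcase
        have hnotsub : ¬ A ⊆ B := by
          intro hsub
          rw [Set.union_eq_self_of_subset_left hsub] at hcase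
          exact absurd hcase (not_lt.mpr le_self_add)
        obtain ⟨a1, ha1A, ha1B⟩ := Set.not_subset.1 hnotsub
        set B1 := G.cl (insert a1 B) with hB1
        have hB1closed : G.Closed B1 := G.cl_idem _
        have ha1ncl : a1 ∉ G.cl B := by rw [hB]; exact ha1B
        have hdimiB : G.dim (insert a1 B) = G.dim B + 1 :=
          G.dim_insert_of_not_mem_cl hBfd ha1ncl
        have hiBfd : G.FinDim (insert a1 B) := by
          rw [Pregeometry.FinDim, hdimiB]
          exact Cardinal.add_lt_aleph0 hBfd Cardinal.one_lt_aleph0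
        have hB1fd : G.FinDim B1 := G.finDim_cl hiBfd
        have hdimB1 : G.dim B1 = G.dim B + 1 := by rw [hB1, G.dim_cl hiBfd, hdimiB]
        have hABfd : G.FinDim (A ∪ B) :=
          lt_of_le_of_lt hle (Cardinal.add_lt_aleph0 hBfd (Cardinal.nat_lt_aleph0 _))
        have hdimU : G.dim (A ∪ B1) = G.dim (A ∪ B) := by
          apply G.dim_congr_cl hABfd
          · intro x hx
            rcases hx with hx | hx
            · exact G.subset_cl _ (Or.inl hx)
            · refine G.cl_mono _ _ ?_ hx
              intro y hy
              rcases hy with rfl | hy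
              · exact Or.inl ha1A
              · exact Or.inr hy
          · intro x hx
            rcases hx with hx | hx
            · exact G.subset_cl _ (Or.inl hx)
            · exact G.subset_cl _ (Or.inr (G.subset_cl _ (Set.mem_insert_of_mem _ hx)))
        have hle1 : G.dim (A ∪ B1) ≤ G.dim B1 + ((k+1 : ℕ) : Cardinal) := by
          rw [hdimU, hdimB1]
          refine hle.trans (le_of_eq ?_)
          push_cast
          ring
        have hstep1 := ih (k+1) hk1 A B1 hA hB1closed hAfd hB1fd hle1
        set A1 := A ∩ B1 with hA1
        have hA1closed : G.Closed A1 := hA.inter hB1closed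
        have hA1fd : G.FinDim A1 :=
          G.finDim_mono_cl hAfd (Set.inter_subset_left.trans (G.subset_cl A))
        have hle2 : G.dim (A1 ∪ B) ≤ G.dim B + ((1 : ℕ) : Cardinal) := by
          have hsub : A1 ∪ B ⊆ G.cl (insert a1 B) := by
            intro x hx
            rcases hx with hx | hx
            · exact hx.2
            · exact G.subset_cl _ (Set.mem_insert_of_mem _ hx)
          refine (G.dim_mono_cl hiBfd hsub).trans ?_
          rw [hdimiB]
          push_cast
          exact le_rfl
        have hstep2 := ih 1 h1lt A1 B hA1closed hB hA1fd hBfd hle2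
        have hBB1 : B ⊆ B1 := (Set.subset_insert a1 B).trans (G.subset_cl _)
        have hinter : A1 ∩ B = A ∩ B := by
          rw [hA1, Set.inter_assoc, Set.inter_eq_right.mpr hBB1]
        calc G.dim A ≤ G.dim A1 + ((k+1 : ℕ) : Cardinal) := hstep1
          _ ≤ (G.dim (A1 ∩ B) + ((1:ℕ) : Cardinal)) + ((k+1:ℕ) : Cardinal) :=
              add_le_add_left hstep2 _
          _ = G.dim (A ∩ B) + ((k+2 : ℕ) : Cardinal) := by
              rw [hinter]
              push_cast
              ring

lemma modular_of_criterion (hcrit : G.Criterion) : G.Modular := by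
  intro A B hA hB hAfd hBfd
  have hsubmod := G.dim_submodular hAfd hBfd
  obtain ⟨I, hIA, hIind, hIfin, hIspan, hIdim⟩ := G.exists_basis_of_finDim hAfd
  have hUsub : A ∪ B ⊆ G.cl (B ∪ I) := by
    intro x hx
    rcases hx with hx | hx
    · exact G.cl_mono _ _ Set.subset_union_right (hIspan hx)
    · exact G.subset_cl _ (Or.inl hx)
  have hBIfd : G.FinDim (B ∪ I) :=
    lt_of_le_of_lt (G.dim_union_le_ncard hBfd hIfin)
      (Cardinal.add_lt_aleph0 hBfd (Cardinal.nat_lt_aleph0 _))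
  have hUfd : G.FinDim (A ∪ B) := G.finDim_mono_cl hBIfd hUsub
  obtain ⟨nU, hnU⟩ := G.finDim_nat hUfd
  obtain ⟨nB, hnB⟩ := G.finDim_nat hBfd
  have hBle : G.dim B ≤ G.dim (A ∪ B) :=
    G.dim_mono_cl hUfd (Set.subset_union_right.trans (G.subset_cl _))
  have hnBU : nB ≤ nU := by
    rw [hnB, hnU] at hBle
    exact_mod_cast hBle
  set d := nU - nB with hd
  have hle : G.dim (A ∪ B) ≤ G.dim B + d := by
    rw [hnU, hnB]
    have heq : nU = nB + d := by omega
    rw [heq]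
    push_cast
    exact le_rfl
  have hkey := G.key hcrit d A B hA hB hAfd hBfd hle
  refine le_antisymm hsubmod ?_
  calc G.dim A + G.dim B ≤ (G.dim (A ∩ B) + d) + G.dim B := add_le_add_left hkey _
    _ = G.dim (A ∪ B) + G.dim (A ∩ B) := by
        rw [hnU, hnB]
        have heq : nU = nB + d := by omega
        rw [heq]
        push_cast
        ring

lemma criterion_of_modular (hMod : G.Modular) : G.Criterion := by
  intro a b B hB hBfd hab hle
  have hpfin : ({a, b} : Set β).Finite := Set.toFinite _
  have hpfd : G.FinDim {a, b} := G.finDim_of_finite hpfin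
  set A := G.cl {a, b} with hAdef
  have hAclosed : G.Closed A := G.cl_idem _
  have hAfd : G.FinDim A := G.finDim_cl hpfd
  have hdimA : G.dim A = 2 := by rw [hAdef, G.dim_cl hpfd, hab]
  have hUfd : G.FinDim ({a, b} ∪ B) :=
    lt_of_le_of_lt hle (Cardinal.add_lt_aleph0 hBfd Cardinal.one_lt_aleph0)
  have hdimU : G.dim (A ∪ B) = G.dim ({a, b} ∪ B) := by
    apply G.dim_congr_cl hUfd
    · intro x hx
      rcases hx with hx | hx
      · exact G.cl_mono _ _ Set.subset_union_left hx
      · exact G.subset_cl _ (Or.inr hx)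
    · intro x hx
      rcases hx with hx | hx
      · exact G.subset_cl _ (Or.inl (G.subset_cl _ hx))
      · exact G.subset_cl _ (Or.inr hx)
  have hmod := hMod A B hAclosed hB hAfd hBfd
  obtain ⟨nB, hnB⟩ := G.finDim_nat hBfd
  have hIfd : G.FinDim (A ∩ B) :=
    G.finDim_mono_cl hAfd (Set.inter_subset_left.trans (G.subset_cl A))
  obtain ⟨nI, hnI⟩ := G.finDim_nat hIfd
  have hUfd2 : G.FinDim (A ∪ B) := by
    rw [Pregeometry.FinDim, hdimU]
    exact hUfd
  obtain ⟨nU, hnU⟩ := G.finDim_nat hUfd2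
  have heqn : nU + nI = 2 + nB := by
    rw [hnU, hnI, hdimA, hnB] at hmod
    exact_mod_cast hmod
  have hlen : nU ≤ nB + 1 := by
    have h := hle
    rw [← hdimU] at h
    rw [hnU, hnB] at h
    exact_mod_cast h
  have hnI1 : 1 ≤ nI := by omega
  by_contra hno
  push_neg at hno
  have hsub : A ∩ B ⊆ G.cl (∅ : Set β) := by
    intro x hx
    refine hno x ⟨hx.1, ?_⟩
    rw [hB]
    exact hx.2
  have hdim0 : G.dim (A ∩ B) ≤ 0 := by
    have h := G.dim_le_ncard_of_subset_cl Set.finite_empty hsub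
    simpa using h
  rw [hnI] at hdim0
  have : nI = 0 := by exact_mod_cast le_antisymm hdim0 zero_le
  omega

end Pregeometry


/-- A pregeometry `(S, cl)` is modular iff the following condition `(*)`
holds: whenever `a, b ∈ S`, `B ⊆ S` is closed and finite dimensional,
`dim(ab) = 2` and `dim(ab/B) ≤ 1` (i.e. `dim({a,b} ∪ B) ≤ dim B + 1`), then
there is `c ∈ cl(ab) ∩ cl(B)` with `c ∉ cl(∅)`. -/
theorem pregeometry_modular_iff_criterion {β : Type u} (G : Pregeometry β) :
    G.Modular ↔
      ∀ (a b : β) (B : Set β), G.Closed B → G.FinDim B →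
        G.dim {a, b} = 2 → G.dim ({a, b} ∪ B) ≤ G.dim B + 1 →
        ∃ c, c ∈ G.cl {a, b} ∩ G.cl B ∧ c ∉ G.cl (∅ : Set β) :=
  ⟨fun hMod => G.criterion_of_modular hMod, fun hcrit => G.modular_of_criterion hcrit⟩
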